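/- Let V be a steplike potential with steps V₊, V₋ and threshold x_M, let z ∈ ℂ, and let r₊, r₋ ∈ ℂ satisfy r₊² = z − V₊ and r₋² = z − V₋. Suppose u₁ and u₂ are solutions of −u'' + V u = z u, and there are constants T₁, R₁, T₂, R₂ ∈ ℂ with: u₁(x) = T₁ e^{−i r₋ x} for all x ≤ −x_M and u₁(x) = e^{−i r₊ x} + R₁ e^{i r₊ x} for all x ≥ x_M; u₂(x) = T₂ e^{i r₋ x} for all x ≤ −x_M and u₂(x) = e^{−i r₊ x} + R₂ e^{i r₊ x} for all x ≥ x_M. Then r₋ T₁ T₂ = r₊ (R₂ − R₁). -/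

import Mathlib

open Complex MeasureTheory
open scoped Classical
open Set Function

/-- `u` is a solution of `-u'' + V u = z u`: `u` is differentiable with continuous
derivative, and the derivative satisfies the integrated form of the ODE. -/
def IsSolution (V : ℝ → ℝ) (z : ℂ) (u : ℝ → ℂ) : Prop :=
  Differentiable ℝ u ∧ Continuous (deriv u) ∧
    ∀ x : ℝ, deriv u x = deriv u 0 + ∫ t in (0:ℝ)..x, ((V t : ℂ) - z) * u t


lemma parts_le {f g F : ℝ → ℂ} (hF : ∀ t, HasDerivAt F (f t) t) (hf : Continuous f)
    (hgi : ∀ a b : ℝ, IntervalIntegrable g volume a b)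
    {a b : ℝ} (hab : a ≤ b) :
    (∫ t in a..b, (f t * (∫ s in a..t, g s) + F t * g t))
      = F b * ∫ s in a..b, g s := by
  have hFc : Continuous F := by
    rw [continuous_iff_continuousAt]; exact fun x => (hF x).continuousAt
  have hGc : Continuous (fun t => ∫ s in a..t, g s) :=
    intervalIntegral.continuous_primitive hgi a
  have hGfc : Continuous (fun t => ∫ s in a..t, f s) :=
    intervalIntegral.continuous_primitive (fun a b => hf.intervalIntegrable a b) a
  have hFi : IntegrableOn f (Ioc a b) := (hf.intervalIntegrable a b).1
  have hGi : IntegrableOn g (Ioc a b) := (hgi a b).1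
  have i1 : IntervalIntegrable (fun t => f t * (∫ s in a..t, g s)) volume a b :=
    (hf.mul hGc).intervalIntegrable a b
  have i2 : IntervalIntegrable (fun t => F t * g t) volume a b :=
    (hgi a b).continuousOn_mul hFc.continuousOn
  have i3 : IntervalIntegrable (fun t => (∫ s in a..t, f s) * g t) volume a b :=
    (hgi a b).continuousOn_mul hGfc.continuousOn
  have hFrep : ∀ t, F t = F a + ∫ s in a..t, f s := by
    intro t
    rw [intervalIntegral.integral_eq_sub_of_hasDerivAt (fun x _ => hF x)
      (hf.intervalIntegrable a t)]
    ring
  have hFab : (∫ s in a..b, f s) = F b - F a :=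
    intervalIntegral.integral_eq_sub_of_hasDerivAt (fun x _ => hF x)
      (hf.intervalIntegrable a b)
  -- split LHS
  rw [intervalIntegral.integral_add i1 i2]
  -- rewrite second term
  have h2 : (∫ t in a..b, F t * g t)
      = F a * (∫ t in a..b, g t) + ∫ t in a..b, (∫ s in a..t, f s) * g t := by
    rw [← intervalIntegral.integral_const_mul,
      ← intervalIntegral.integral_add ((hgi a b).const_mul _) i3]
    apply intervalIntegral.integral_congr
    intro t _
    show F t * g t = F a * g t + (∫ s in a..t, f s) * g t
    rw [hFrep t]; ring
  rw [h2]
  -- now the key: D2 + D1 = (F b - F a) * ∫ g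
  have key : (∫ t in a..b, f t * (∫ s in a..t, g s))
      + (∫ t in a..b, (∫ s in a..t, f s) * g t)
      = (F b - F a) * ∫ s in a..b, g s := by
    set A : Set ℝ := Ioc a b with hA
    set μ : Measure ℝ := volume.restrict A with hμ
    have hAm : MeasurableSet A := measurableSet_Ioc
    set H : ℝ → ℝ → ℂ := fun t s => (if s ≤ t then f s else 0) * g t with hH
    set H2 : ℝ → ℝ → ℂ := fun s t => if t ≤ s then f s * g t else 0 with hH2
    have hHint : Integrable (uncurry H) (μ.prod μ) := by
      have hbase : Integrable (fun p : ℝ × ℝ => g p.1 * f p.2) (μ.prod μ) :=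
        hGi.mul_prod hFi
      have := hbase.indicator (measurableSet_le measurable_snd measurable_fst)
      refine this.congr ?_
      refine Filter.Eventually.of_forall fun p => ?_
      by_cases h : p.2 ≤ p.1 <;>
        simp [uncurry, hH, Set.indicator_apply, h, mul_comm]
    have hH2int : Integrable (uncurry H2) (μ.prod μ) := by
      have hbase : Integrable (fun p : ℝ × ℝ => f p.1 * g p.2) (μ.prod μ) :=
        hFi.mul_prod hGi
      have := hbase.indicator (measurableSet_le measurable_snd measurable_fst)
      refine this.congr ?_
      refine Filter.Eventually.of_forall fun p => ?_
      by_cases h : p.2 ≤ p.1 <;>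
        simp [uncurry, hH2, Set.indicator_apply, h]
    -- inner identities
    have hinner1 : ∀ s : ℝ, (∫ t, H t s ∂μ) = f s * ∫ t in A ∩ Ici s, g t := by
      intro s
      have : ∀ t, H t s = f s * (Ici s).indicator g t := by
        intro t
        by_cases h : s ≤ t <;> simp [hH, Set.indicator_apply, h]
      simp only [this]
      rw [MeasureTheory.integral_const_mul, hμ, setIntegral_indicator measurableSet_Ici]
    have hinner2 : ∀ s : ℝ, (∫ t, H2 s t ∂μ) = f s * ∫ t in A ∩ Iic s, g t := by
      intro s
      have : ∀ t, H2 s t = f s * (Iic s).indicator g t := by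
        intro t
        by_cases h : t ≤ s <;> simp [hH2, Set.indicator_apply, h]
      simp only [this]
      rw [MeasureTheory.integral_const_mul, hμ, setIntegral_indicator measurableSet_Iic]
    -- D1 as double integral
    have hD1 : (∫ t in a..b, (∫ s in a..t, f s) * g t) = ∫ t, (∫ s, H t s ∂μ) ∂μ := by
      rw [intervalIntegral.integral_of_le hab]
      refine setIntegral_congr_fun hAm fun t ht => ?_
      have : (∫ s, H t s ∂μ) = (∫ s, (if s ≤ t then f s else 0) ∂μ) * g t := by
        rw [← MeasureTheory.integral_mul_const]
      rw [this]
      congr 1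
      have h1 : (∫ s, (if s ≤ t then f s else 0) ∂μ) = ∫ s in A ∩ Iic t, f s := by
        have : ∀ s, (if s ≤ t then f s else 0) = (Iic t).indicator f s := by
          intro s; by_cases h : s ≤ t <;> simp [Set.indicator_apply, h]
        simp only [this]
        rw [hμ, setIntegral_indicator measurableSet_Iic]
      rw [h1, hA, Set.Ioc_inter_Iic, min_eq_right ht.2, intervalIntegral.integral_of_le ht.1.le]
    -- D2 as double integral
    have hD2 : (∫ t in a..b, f t * (∫ s in a..t, g s)) = ∫ s, (∫ t, H2 s t ∂μ) ∂μ := by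
      rw [intervalIntegral.integral_of_le hab]
      refine setIntegral_congr_fun hAm fun s hs => ?_
      rw [hinner2 s, hA, Set.Ioc_inter_Iic, min_eq_right hs.2,
        intervalIntegral.integral_of_le hs.1.le]
    -- swap D1
    have hswap : (∫ t, (∫ s, H t s ∂μ) ∂μ) = ∫ s, (∫ t, H t s ∂μ) ∂μ :=
      MeasureTheory.integral_integral_swap hHint
    -- combine
    have hsum : ∀ s : ℝ, (∫ t in A ∩ Ici s, g t) + (∫ t in A ∩ Iic s, g t) = ∫ t in A, g t := by
      intro s
      have he : (∫ t in A ∩ Ici s, g t) = ∫ t in A ∩ Ioi s, g t := by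
        refine setIntegral_congr_set ?_
        exact ((Filter.EventuallyEq.refl _ _).inter Ioi_ae_eq_Ici).symm
      rw [he]
      rw [← setIntegral_union]
      · congr 1
        rw [← Set.inter_union_distrib_left, Set.union_comm (Set.Ioi s) (Set.Iic s),
          Set.Iic_union_Ioi, Set.inter_univ]
      · exact (Set.Iic_disjoint_Ioi le_rfl).symm.mono inter_subset_right inter_subset_right
      · exact measurableSet_Ioc.inter measurableSet_Iic
      · exact hGi.mono_set inter_subset_left
      · exact hGi.mono_set inter_subset_left
    have int1 : Integrable (fun s => ∫ t, H t s ∂μ) μ := hHint.integral_prod_right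
    have int2 : Integrable (fun s => ∫ t, H2 s t ∂μ) μ := hH2int.integral_prod_left
    rw [hD1, hD2, hswap, ← MeasureTheory.integral_add int2 int1]
    have : ∀ s, (∫ t, H2 s t ∂μ) + (∫ t, H t s ∂μ) = f s * ∫ t in A, g t := by
      intro s
      rw [hinner1 s, hinner2 s, ← mul_add, add_comm (∫ t in A ∩ Iic s, g t), hsum s]
    simp only [this]
    rw [MeasureTheory.integral_mul_const, hμ, ← intervalIntegral.integral_of_le hab,
      ← intervalIntegral.integral_of_le hab, hFab]
  linear_combination key

lemma wronskian_eq {V : ℝ → ℝ} {z : ℂ} {u₁ u₂ : ℝ → ℂ}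
    (hVmeas : Measurable V) (hVbdd : ∃ C : ℝ, ∀ x : ℝ, |V x| ≤ C)
    (hu₁ : IsSolution V z u₁) (hu₂ : IsSolution V z u₂)
    {a b : ℝ} (hab : a ≤ b) :
    u₁ b * deriv u₂ b - deriv u₁ b * u₂ b = u₁ a * deriv u₂ a - deriv u₁ a * u₂ a := by
  obtain ⟨hd₁, hc₁, hode₁⟩ := hu₁
  obtain ⟨hd₂, hc₂, hode₂⟩ := hu₂
  obtain ⟨C, hC⟩ := hVbdd
  have hVm : AEStronglyMeasurable (fun t => ((V t : ℂ) - z)) volume :=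
    ((Complex.measurable_ofReal.comp hVmeas).sub measurable_const).aestronglyMeasurable
  have hgi : ∀ (u : ℝ → ℂ), Continuous u → ∀ c d : ℝ,
      IntervalIntegrable (fun t => ((V t : ℂ) - z) * u t) volume c d := by
    intro u hu c d
    rw [intervalIntegrable_iff]
    have hui : IntegrableOn u (Set.uIoc c d) volume := by
      have h : IntervalIntegrable u volume c d := hu.intervalIntegrable c d
      rwa [intervalIntegrable_iff] at h
    refine hui.bdd_mul hVm.restrict (c := C + ‖z‖) (Filter.Eventually.of_forall fun x => ?_)
    calc ‖(V x : ℂ) - z‖ ≤ ‖(V x : ℂ)‖ + ‖z‖ := norm_sub_le _ _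
    _ ≤ C + ‖z‖ := by
        rw [Complex.norm_real, Real.norm_eq_abs]
        exact add_le_add (hC x) le_rfl
  have hrep : ∀ (u : ℝ → ℂ), Continuous u →
      (∀ x : ℝ, deriv u x = deriv u 0 + ∫ t in (0:ℝ)..x, ((V t : ℂ) - z) * u t) →
      ∀ t : ℝ, (∫ s in a..t, ((V s : ℂ) - z) * u s) = deriv u t - deriv u a := by
    intro u hu hode t
    have h := intervalIntegral.integral_interval_sub_left (hgi u hu 0 t) (hgi u hu 0 a)
    rw [← h, hode t, hode a]; ring
  have P1 := parts_le (F := u₁) (f := deriv u₁) (g := fun t => ((V t : ℂ) - z) * u₂ t)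
    (fun t => (hd₁ t).hasDerivAt) hc₁ (hgi u₂ hd₂.continuous) hab
  have P2 := parts_le (F := u₂) (f := deriv u₂) (g := fun t => ((V t : ℂ) - z) * u₁ t)
    (fun t => (hd₂ t).hasDerivAt) hc₂ (hgi u₁ hd₁.continuous) hab
  simp only [hrep u₂ hd₂.continuous hode₂] at P1
  simp only [hrep u₁ hd₁.continuous hode₁] at P2
  -- rewrite the integrand of P1 in terms of that of P2
  have hcongr : (∫ t in a..b, (deriv u₁ t * (deriv u₂ t - deriv u₂ a) + u₁ t * (((V t : ℂ) - z) * u₂ t)))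
      = ∫ t in a..b, ((deriv u₂ t * (deriv u₁ t - deriv u₁ a) + u₂ t * (((V t : ℂ) - z) * u₁ t))
          + (deriv u₁ a * deriv u₂ t - deriv u₂ a * deriv u₁ t)) := by
    apply intervalIntegral.integral_congr
    intro t _
    dsimp only
    ring
  have II2 : IntervalIntegrable
      (fun t => deriv u₂ t * (deriv u₁ t - deriv u₁ a) + u₂ t * (((V t : ℂ) - z) * u₁ t))
      volume a b := by
    refine IntervalIntegrable.add ?_ ?_
    · exact (hc₂.mul (hc₁.sub continuous_const)).intervalIntegrable a b
    · exact (hgi u₁ hd₁.continuous a b).continuousOn_mul hd₂.continuous.continuousOn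
  have II3 : IntervalIntegrable
      (fun t => deriv u₁ a * deriv u₂ t - deriv u₂ a * deriv u₁ t) volume a b :=
    ((continuous_const.mul hc₂).sub (continuous_const.mul hc₁)).intervalIntegrable a b
  rw [hcongr, intervalIntegral.integral_add II2 II3, P2] at P1
  have hextra : (∫ t in a..b, (deriv u₁ a * deriv u₂ t - deriv u₂ a * deriv u₁ t))
      = deriv u₁ a * (u₂ b - u₂ a) - deriv u₂ a * (u₁ b - u₁ a) := by
    rw [intervalIntegral.integral_sub (f := fun t => deriv u₁ a * deriv u₂ t)
      (g := fun t => deriv u₂ a * deriv u₁ t) ((continuous_const.mul hc₂).intervalIntegrable a b)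
      ((continuous_const.mul hc₁).intervalIntegrable a b),
      intervalIntegral.integral_const_mul, intervalIntegral.integral_const_mul,
      intervalIntegral.integral_deriv_eq_sub (fun x _ => hd₂ x) (hc₂.intervalIntegrable a b),
      intervalIntegral.integral_deriv_eq_sub (fun x _ => hd₁ x) (hc₁.intervalIntegrable a b)]
  rw [hextra] at P1
  linear_combination -P1

theorem reflection_difference_relation
    (V : ℝ → ℝ) (Vp Vm xM : ℝ)
    (hVmeas : Measurable V) (hVbdd : ∃ C : ℝ, ∀ x : ℝ, |V x| ≤ C)
    (hxM : 0 < xM)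
    (hVp : ∀ x : ℝ, xM < x → V x = Vp)
    (hVm : ∀ x : ℝ, x < -xM → V x = Vm)
    (z rp rm : ℂ) (hrp : rp ^ 2 = z - (Vp : ℂ)) (hrm : rm ^ 2 = z - (Vm : ℂ))
    (u₁ u₂ : ℝ → ℂ) (hu₁ : IsSolution V z u₁) (hu₂ : IsSolution V z u₂)
    (T₁ R₁ T₂ R₂ : ℂ)
    (hu₁L : ∀ x : ℝ, x ≤ -xM → u₁ x = T₁ * Complex.exp (-(Complex.I * rm * x)))
    (hu₁R : ∀ x : ℝ, xM ≤ x →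
      u₁ x = Complex.exp (-(Complex.I * rp * x)) + R₁ * Complex.exp (Complex.I * rp * x))
    (hu₂L : ∀ x : ℝ, x ≤ -xM → u₂ x = T₂ * Complex.exp (Complex.I * rm * x))
    (hu₂R : ∀ x : ℝ, xM ≤ x →
      u₂ x = Complex.exp (-(Complex.I * rp * x)) + R₂ * Complex.exp (Complex.I * rp * x)) :
    rm * T₁ * T₂ = rp * (R₂ - R₁) := by
  set a : ℝ := -xM - 1 with hadef
  set b : ℝ := xM + 1 with hbdef
  have haL : a < -xM := by rw [hadef]; linarith
  have hbR : xM < b := by rw [hbdef]; linarith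
  have hab : a ≤ b := by rw [hadef, hbdef]; linarith
  have hexp : ∀ (c : ℂ) (x : ℝ), HasDerivAt (fun y : ℝ => Complex.exp (c * y))
      (c * Complex.exp (c * x)) x := by
    intro c x
    simpa [mul_comm] using (((hasDerivAt_id (x : ℂ)).const_mul c).cexp).comp_ofReal
  -- eventual equalities
  have hev₁a : u₁ =ᶠ[nhds a] fun x : ℝ => T₁ * Complex.exp (-(Complex.I * rm * x)) := by
    filter_upwards [Iio_mem_nhds haL] with x hx
    exact hu₁L x (le_of_lt hx)
  have hev₂a : u₂ =ᶠ[nhds a] fun x : ℝ => T₂ * Complex.exp (Complex.I * rm * x) := by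
    filter_upwards [Iio_mem_nhds haL] with x hx
    exact hu₂L x (le_of_lt hx)
  have hev₁b : u₁ =ᶠ[nhds b] fun x : ℝ =>
      Complex.exp (-(Complex.I * rp * x)) + R₁ * Complex.exp (Complex.I * rp * x) := by
    filter_upwards [Ioi_mem_nhds hbR] with x hx
    exact hu₁R x (le_of_lt hx)
  have hev₂b : u₂ =ᶠ[nhds b] fun x : ℝ =>
      Complex.exp (-(Complex.I * rp * x)) + R₂ * Complex.exp (Complex.I * rp * x) := by
    filter_upwards [Ioi_mem_nhds hbR] with x hx
    exact hu₂R x (le_of_lt hx)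
  -- derivatives
  have h1a := (hexp (-(Complex.I * rm)) a).const_mul T₁
  simp only [neg_mul] at h1a
  have h2a := (hexp (Complex.I * rm) a).const_mul T₂
  have h1b := (hexp (-(Complex.I * rp)) b).add ((hexp (Complex.I * rp) b).const_mul R₁)
  simp only [neg_mul] at h1b
  have h2b := (hexp (-(Complex.I * rp)) b).add ((hexp (Complex.I * rp) b).const_mul R₂)
  simp only [neg_mul] at h2b
  have hd₁a := hev₁a.deriv_eq.trans h1a.deriv
  have hd₂a := hev₂a.deriv_eq.trans h2a.deriv
  have hd₁b := hev₁b.deriv_eq.trans h1b.deriv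
  have hd₂b := hev₂b.deriv_eq.trans h2b.deriv
  have hPQ : Complex.exp (-(Complex.I * rp * (b : ℝ))) * Complex.exp (Complex.I * rp * (b : ℝ))
      = 1 := by rw [← Complex.exp_add]; simp
  have hMN : Complex.exp (-(Complex.I * rm * (a : ℝ))) * Complex.exp (Complex.I * rm * (a : ℝ))
      = 1 := by rw [← Complex.exp_add]; simp
  have hWb : u₁ b * deriv u₂ b - deriv u₁ b * u₂ b = 2 * Complex.I * rp * (R₂ - R₁) := by
    rw [hu₁R b hbR.le, hu₂R b hbR.le, hd₁b, hd₂b]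
    linear_combination (2 * Complex.I * rp * (R₂ - R₁)) * hPQ
  have hWa : u₁ a * deriv u₂ a - deriv u₁ a * u₂ a = 2 * Complex.I * rm * T₁ * T₂ := by
    rw [hu₁L a haL.le, hu₂L a haL.le, hd₁a, hd₂a]
    linear_combination (2 * Complex.I * rm * T₁ * T₂) * hMN
  have W := wronskian_eq hVmeas hVbdd hu₁ hu₂ hab
  rw [hWb, hWa] at W
  refine mul_left_cancel₀ (show (2 : ℂ) * Complex.I ≠ 0 by simp [Complex.I_ne_zero]) ?_
  linear_combination -W
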